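/- One-point extension of nonexpansive maps: Let n be a natural number, let A be a subset of ℝⁿ, let f : A → ℝⁿ be a nonexpansive (1-Lipschitz) map, and let x ∈ ℝⁿ. Then there exists y ∈ ℝⁿ such that ‖y − f(a)‖ ≤ ‖x − a‖ for every a ∈ A; consequently f extends to a nonexpansive map on A ∪ {x} sending x to y. -/

import Mathlib

open Finset
open scoped RealInnerProductSpace

variable {E : Type*} [NormedAddCommGroup E] [InnerProductSpace ℝ E]

private lemma kz_helper {ι : Type*} (t : Finset ι) (w : ι → ℝ) (v : ι → E)
    (hw : ∑ i ∈ t, w i = 1) (x : E) :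
    ∑ i ∈ t, w i * ‖x - v i‖ ^ 2 =
      ‖x - ∑ i ∈ t, w i • v i‖ ^ 2 + (∑ i ∈ t, w i * ‖v i‖ ^ 2 - ‖∑ i ∈ t, w i • v i‖ ^ 2) := by
  have h1 : ∑ i ∈ t, w i * ‖x - v i‖ ^ 2
      = ((∑ i ∈ t, w i) * ‖x‖ ^ 2 - 2 * (inner ℝ x (∑ i ∈ t, w i • v i) : ℝ)) + ∑ i ∈ t, w i * ‖v i‖ ^ 2 := by
    rw [inner_sum, Finset.sum_mul, Finset.mul_sum, ← Finset.sum_sub_distrib, ← Finset.sum_add_distrib]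
    refine Finset.sum_congr rfl fun i _ => ?_
    rw [norm_sub_sq_real, real_inner_smul_right]
    ring
  rw [h1, hw, norm_sub_sq_real]
  ring

private lemma kz_key {ι : Type*} (t : Finset ι) (w : ι → ℝ) (v a : ι → E)
    (hw0 : ∀ i ∈ t, 0 ≤ w i) (hw : ∑ i ∈ t, w i = 1)
    (hpair : ∀ i ∈ t, ∀ j ∈ t, ‖v i - v j‖ ≤ ‖a i - a j‖) (x : E) :
    ∑ i ∈ t, w i * ‖(∑ j ∈ t, w j • v j) - v i‖ ^ 2 ≤ ∑ i ∈ t, w i * ‖x - a i‖ ^ 2 := by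
  set yb := ∑ j ∈ t, w j • v j with hyb
  set ab := ∑ j ∈ t, w j • a j with hab
  set Qv := ∑ i ∈ t, w i * ‖v i‖ ^ 2 - ‖yb‖ ^ 2 with hQv
  set Qa := ∑ i ∈ t, w i * ‖a i‖ ^ 2 - ‖ab‖ ^ 2 with hQa
  have hv : ∑ i ∈ t, w i * ‖yb - v i‖ ^ 2 = Qv := by
    rw [kz_helper t w v hw yb, sub_self, norm_zero]; ring
  have hdv : ∑ i ∈ t, w i * (∑ j ∈ t, w j * ‖v i - v j‖ ^ 2) = 2 * Qv := by
    have : ∀ i ∈ t, w i * (∑ j ∈ t, w j * ‖v i - v j‖ ^ 2) = w i * ‖v i - yb‖ ^ 2 + w i * Qv := by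
      intro i _
      rw [kz_helper t w v hw (v i)]; ring
    rw [Finset.sum_congr rfl this, Finset.sum_add_distrib, ← Finset.sum_mul, hw]
    have : ∀ i ∈ t, w i * ‖v i - yb‖ ^ 2 = w i * ‖yb - v i‖ ^ 2 := by
      intro i _; rw [norm_sub_rev]
    rw [Finset.sum_congr rfl this, hv]; ring
  have hda : ∑ i ∈ t, w i * (∑ j ∈ t, w j * ‖a i - a j‖ ^ 2) = 2 * Qa := by
    have h1 : ∑ i ∈ t, w i * ‖ab - a i‖ ^ 2 = Qa := by
      rw [kz_helper t w a hw ab, sub_self, norm_zero]; ring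
    have : ∀ i ∈ t, w i * (∑ j ∈ t, w j * ‖a i - a j‖ ^ 2) = w i * ‖a i - ab‖ ^ 2 + w i * Qa := by
      intro i _
      rw [kz_helper t w a hw (a i)]; ring
    rw [Finset.sum_congr rfl this, Finset.sum_add_distrib, ← Finset.sum_mul, hw]
    have : ∀ i ∈ t, w i * ‖a i - ab‖ ^ 2 = w i * ‖ab - a i‖ ^ 2 := by
      intro i _; rw [norm_sub_rev]
    rw [Finset.sum_congr rfl this, h1]; ring
  have hQ : Qv ≤ Qa := by
    have : ∑ i ∈ t, w i * (∑ j ∈ t, w j * ‖v i - v j‖ ^ 2)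
        ≤ ∑ i ∈ t, w i * (∑ j ∈ t, w j * ‖a i - a j‖ ^ 2) := by
      refine Finset.sum_le_sum fun i hi => ?_
      refine mul_le_mul_of_nonneg_left ?_ (hw0 i hi)
      refine Finset.sum_le_sum fun j hj => ?_
      refine mul_le_mul_of_nonneg_left ?_ (hw0 j hj)
      exact pow_le_pow_left₀ (norm_nonneg _) (hpair i hi j hj) 2
    rw [hdv, hda] at this; linarith
  have hx : ∑ i ∈ t, w i * ‖x - a i‖ ^ 2 = ‖x - ab‖ ^ 2 + Qa := by
    rw [kz_helper t w a hw x]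
  rw [hv, hx]
  nlinarith [sq_nonneg ‖x - ab‖]

private lemma kz_finite {ι : Type*} [ProperSpace E] (t : Finset ι) (ht : t.Nonempty)
    (v a : ι → E) (hpair : ∀ i ∈ t, ∀ j ∈ t, ‖v i - v j‖ ≤ ‖a i - a j‖) (x : E) :
    ∃ y : E, ∀ i ∈ t, ‖y - v i‖ ≤ ‖x - a i‖ := by
  classical
  set ψ : ι → E → ℝ := fun i y => ‖y - v i‖ ^ 2 - ‖x - a i‖ ^ 2 with hψ
  set φ : E → ℝ := fun y => t.sup' ht (fun i => ψ i y) with hφ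
  have hψc : ∀ i ∈ t, Continuous (fun y => ψ i y) := by
    intro i _
    exact ((continuous_id.sub continuous_const).norm.pow 2).sub continuous_const
  have hφc : Continuous φ := Continuous.finset_sup'_apply ht hψc
  obtain ⟨i₀, hi₀⟩ := id ht
  have hcoer : Filter.Tendsto φ (Filter.cocompact E) Filter.atTop := by
    have h1 : Filter.Tendsto (fun y : E => ψ i₀ y) (Filter.cocompact E) Filter.atTop := by
      have hn : Filter.Tendsto (fun y : E => ‖y - v i₀‖) (Filter.cocompact E) Filter.atTop := by
        refine Filter.tendsto_atTop_mono (fun y => ?_)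
          (Filter.tendsto_atTop_add_const_right _ (-‖v i₀‖) tendsto_norm_cocompact_atTop)
        have := norm_sub_norm_le y (v i₀)
        linarith [norm_sub_rev y (v i₀)]
      exact Filter.tendsto_atTop_add_const_right _ _
        ((Filter.tendsto_pow_atTop (by norm_num)).comp hn)
    exact Filter.tendsto_atTop_mono (fun y => Finset.le_sup' (fun i => ψ i y) hi₀) h1
  obtain ⟨y, hy⟩ := hφc.exists_forall_le hcoer
  set m := φ y with hm
  rcases le_or_gt m 0 with hm0 | hm0
  · refine ⟨y, fun i hi => ?_⟩
    have := (Finset.le_sup' (fun i => ψ i y) hi).trans hm0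
    have h2 : ‖y - v i‖ ^ 2 ≤ ‖x - a i‖ ^ 2 := by
      simp only [hψ] at this; linarith
    exact (pow_le_pow_iff_left₀ (norm_nonneg _) (norm_nonneg _) (by norm_num)).mp h2
  · exfalso
    set T := t.filter (fun i => ψ i y = m) with hT
    have hTsub : T ⊆ t := Finset.filter_subset _ _
    have hTne : T.Nonempty := by
      obtain ⟨i, hi, hie⟩ := Finset.exists_mem_eq_sup' ht (fun i => ψ i y)
      exact ⟨i, Finset.mem_filter.mpr ⟨hi, hie.symm⟩⟩
    set C : Set E := convexHull ℝ (↑(T.image v)) with hC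
    have hCne : C.Nonempty := by
      obtain ⟨i, hi⟩ := id hTne
      exact ⟨v i, subset_convexHull ℝ _ (Finset.mem_coe.mpr (Finset.mem_image_of_mem v hi))⟩
    have hCconv : Convex ℝ C := convex_convexHull ℝ _
    have hCcompact : IsCompact C := (T.image v).finite_toSet.isCompact_convexHull (𝕜 := ℝ)
    have hyC : y ∈ C := by
      by_contra hyC
      obtain ⟨p, hpC, hpmin⟩ := exists_norm_eq_iInf_of_complete_convex hCne
        hCcompact.isComplete hCconv y
      have hproj : ∀ c ∈ C, (inner ℝ (y - p) (c - p) : ℝ) ≤ 0 :=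
        (norm_eq_iInf_iff_real_inner_le_zero hCconv hpC).mp hpmin
      have hyp : y ≠ p := fun h => hyC (h ▸ hpC)
      have hd : 0 < ‖y - p‖ ^ 2 := by
        have : 0 < ‖y - p‖ := norm_sub_pos_iff.mpr hyp
        positivity
      have hinner : ∀ i ∈ T, (inner ℝ (y - v i) (p - y) : ℝ) ≤ -‖y - p‖ ^ 2 := by
        intro i hiT
        have hvC : v i ∈ C := subset_convexHull ℝ _
          (Finset.mem_coe.mpr (Finset.mem_image_of_mem v hiT))
        have h1 := hproj (v i) hvC
        have h2 : (inner ℝ (y - v i) (p - y) : ℝ)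
            = -(‖y - p‖ ^ 2) + (inner ℝ (y - p) (v i - p) : ℝ) := by
          have e1 : y - v i = (y - p) - (v i - p) := by abel
          have e2 : p - y = -(y - p) := by abel
          rw [e1, e2, inner_neg_right, inner_sub_left, real_inner_self_eq_norm_sq,
            real_inner_comm (v i - p)]
          ring
        linarith
      have hexp : ∀ i : ι, ∀ s : ℝ, ψ i (y + s • (p - y))
          = ψ i y + 2 * s * (inner ℝ (y - v i) (p - y) : ℝ) + s ^ 2 * ‖y - p‖ ^ 2 := by
        intro i s
        have e1 : (y + s • (p - y)) - v i = (y - v i) + s • (p - y) := by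
          rw [add_sub_right_comm]
        simp only [hψ, e1, norm_add_sq_real, real_inner_smul_right, norm_smul,
          norm_sub_rev p y, Real.norm_eq_abs, mul_pow, sq_abs]
        ring
      have hev : ∀ i ∈ t, ∀ᶠ s in nhdsWithin (0:ℝ) (Set.Ioi 0),
          ψ i (y + s • (p - y)) < m := by
        intro i hi
        by_cases hiT : i ∈ T
        · have hact : ψ i y = m := (Finset.mem_filter.mp hiT).2
          have hIoo : Set.Ioo (0:ℝ) 1 ∈ nhdsWithin (0:ℝ) (Set.Ioi 0) :=
            Ioo_mem_nhdsGT_of_mem ⟨le_refl 0, zero_lt_one⟩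
          filter_upwards [hIoo] with s hs
          rw [hexp i s, hact]
          have h1 := hinner i hiT
          have h2 : 2 * s * (inner ℝ (y - v i) (p - y) : ℝ) ≤ 2 * s * (-‖y - p‖ ^ 2) :=
            mul_le_mul_of_nonneg_left h1 (by linarith [hs.1])
          have h3 : s ^ 2 * ‖y - p‖ ^ 2 < 2 * s * ‖y - p‖ ^ 2 := by
            have : s ^ 2 < 2 * s := by nlinarith [hs.1, hs.2]
            exact mul_lt_mul_of_pos_right this hd
          linarith
        · have hne : ψ i y ≠ m := fun h => hiT (Finset.mem_filter.mpr ⟨hi, h⟩)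
          have hlt : ψ i y < m := lt_of_le_of_ne (Finset.le_sup' (fun i => ψ i y) hi) hne
          have hcont : Continuous (fun s : ℝ => ψ i (y + s • (p - y))) := by
            have : Continuous (fun s : ℝ => y + s • (p - y)) :=
              continuous_const.add (continuous_id.smul continuous_const)
            exact (hψc i hi).comp this
          have h0 : Filter.Tendsto (fun s : ℝ => ψ i (y + s • (p - y))) (nhds 0)
              (nhds (ψ i y)) := by
            have := hcont.tendsto 0
            simpa using this
          exact (h0.eventually_lt_const hlt).filter_mono nhdsWithin_le_nhds
      have hall := (Finset.eventually_all _).mpr hev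
      obtain ⟨s, hs⟩ := hall.exists
      have hlt : φ (y + s • (p - y)) < m := (Finset.sup'_lt_iff ht).mpr hs
      exact absurd (hy (y + s • (p - y))) (not_le.mpr hlt)
    rw [hC, _root_.convexHull_eq] at hyC
    obtain ⟨ι', t', w, z, hw0, hw1, hz, hcm⟩ := hyC
    have hzT : ∀ j : ι', ∃ i, j ∈ t' → i ∈ T ∧ v i = z j := by
      intro j
      by_cases hj : j ∈ t'
      · obtain ⟨i, hi, he⟩ := Finset.mem_image.mp (Finset.mem_coe.mp (hz j hj))
        exact ⟨i, fun _ => ⟨hi, he⟩⟩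
      · exact ⟨hTne.choose, fun h => absurd h hj⟩
    choose J hJ using hzT
    have hpair' : ∀ i ∈ t', ∀ j ∈ t', ‖(v ∘ J) i - (v ∘ J) j‖ ≤ ‖(a ∘ J) i - (a ∘ J) j‖ :=
      fun i hi j hj => hpair _ (hTsub (hJ i hi).1) _ (hTsub (hJ j hj).1)
    have key := kz_key t' w (v ∘ J) (a ∘ J) hw0 hw1 hpair' x
    have hsum : (∑ j ∈ t', w j • (v ∘ J) j) = y := by
      rw [← hcm, Finset.centerMass_eq_of_sum_1 _ _ hw1]
      exact Finset.sum_congr rfl fun j hj => by rw [Function.comp_apply, (hJ j hj).2]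
    rw [hsum] at key
    have hterm : ∀ i ∈ t', ‖y - (v ∘ J) i‖ ^ 2 = ‖x - (a ∘ J) i‖ ^ 2 + m := by
      intro i hi
      have : ψ (J i) y = m := (Finset.mem_filter.mp (hJ i hi).1).2
      simp only [hψ] at this
      simp only [Function.comp_apply]
      linarith
    have e : ∑ i ∈ t', w i * ‖y - (v ∘ J) i‖ ^ 2
        = ∑ i ∈ t', w i * ‖x - (a ∘ J) i‖ ^ 2 + m := by
      rw [Finset.sum_congr rfl (fun i hi => by rw [hterm i hi])]
      simp only [mul_add]
      rw [Finset.sum_add_distrib, ← Finset.sum_mul, hw1, one_mul]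
    linarith [key, e]

private lemma kz_all [ProperSpace E] (A : Set E) (f : E → E)
    (hf : ∀ a ∈ A, ∀ b ∈ A, ‖f a - f b‖ ≤ ‖a - b‖) (x : E) :
    ∃ y : E, ∀ a ∈ A, ‖y - f a‖ ≤ ‖x - a‖ := by
  classical
  rcases A.eq_empty_or_nonempty with hA | ⟨a₀, ha₀⟩
  · exact ⟨x, by simp [hA]⟩
  · set Z : A → Set E := fun a => Metric.closedBall (f a) ‖x - (a : E)‖ with hZ
    have hKc : IsCompact (Z ⟨a₀, ha₀⟩) := isCompact_closedBall _ _
    have hZc : ∀ a : A, IsClosed (Z a) := fun a => Metric.isClosed_closedBall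
    have hne : ((Z ⟨a₀, ha₀⟩) ∩ ⋂ a : A, Z a).Nonempty := by
      by_contra h
      rw [Set.not_nonempty_iff_eq_empty] at h
      obtain ⟨u, hu⟩ := hKc.elim_finite_subfamily_closed Z hZc h
      obtain ⟨y, hy⟩ := kz_finite (insert ⟨a₀, ha₀⟩ u) (Finset.insert_nonempty _ _)
        (fun a : A => f a) (fun a : A => (a : E))
        (fun i _ j _ => hf i i.2 j j.2) x
      have hyK : y ∈ Z ⟨a₀, ha₀⟩ := by
        simp only [hZ, Metric.mem_closedBall, dist_eq_norm]
        exact hy _ (Finset.mem_insert_self _ _)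
      have hyI : y ∈ ⋂ a ∈ u, Z a := by
        refine Set.mem_iInter₂.mpr fun a ha => ?_
        simp only [hZ, Metric.mem_closedBall, dist_eq_norm]
        exact hy a (Finset.mem_insert_of_mem ha)
      rw [Set.eq_empty_iff_forall_notMem] at hu
      exact hu y ⟨hyK, hyI⟩
    obtain ⟨y, _, hyI⟩ := hne
    refine ⟨y, fun a ha => ?_⟩
    have := Set.mem_iInter.mp hyI ⟨a, ha⟩
    simpa [hZ, Metric.mem_closedBall, dist_eq_norm] using this

/-- One-point extension of nonexpansive maps: if `f : A → ℝⁿ` (`A ⊆ ℝⁿ`) is nonexpansive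
and `x ∈ ℝⁿ`, then there is `y ∈ ℝⁿ` with `‖y - f a‖ ≤ ‖x - a‖` for all `a ∈ A`;
consequently `f` extends to a nonexpansive map on `A ∪ {x}` sending `x` to `y`. -/
theorem extend_nonexpansive_one_point (n : ℕ)
    (A : Set (EuclideanSpace ℝ (Fin n)))
    (f : EuclideanSpace ℝ (Fin n) → EuclideanSpace ℝ (Fin n))
    (hf : ∀ a ∈ A, ∀ b ∈ A, ‖f a - f b‖ ≤ ‖a - b‖)
    (x : EuclideanSpace ℝ (Fin n)) :
    ∃ y : EuclideanSpace ℝ (Fin n),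
      (∀ a ∈ A, ‖y - f a‖ ≤ ‖x - a‖) ∧
      ∃ g : EuclideanSpace ℝ (Fin n) → EuclideanSpace ℝ (Fin n),
        (∀ a ∈ A, g a = f a) ∧ g x = y ∧
        (∀ u ∈ A ∪ {x}, ∀ v ∈ A ∪ {x}, ‖g u - g v‖ ≤ ‖u - v‖) := by
  classical
  obtain ⟨y, hy⟩ := kz_all A f hf x
  refine ⟨y, hy, fun z => if z = x then y else f z, ?_, if_pos rfl, ?_⟩
  · intro a ha
    by_cases hax : a = x
    · subst hax
      have h0 : ‖y - f a‖ ≤ 0 := by simpa using hy a ha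
      have : y = f a := by
        have := le_antisymm h0 (norm_nonneg _)
        rwa [norm_eq_zero, sub_eq_zero] at this
      simp [this]
    · simp [hax]
  · intro u hu v hv
    by_cases hux : u = x <;> by_cases hvx : v = x
    · subst hux; subst hvx; simp
    · subst hux
      have hvA : v ∈ A := by
        rcases hv with hv | hv
        · exact hv
        · exact absurd hv hvx
      simp only [if_pos rfl, if_neg hvx]
      exact hy v hvA
    · subst hvx
      have huA : u ∈ A := by
        rcases hu with hu | hu
        · exact hu
        · exact absurd hu hux
      simp only [if_pos rfl, if_neg hux]
      rw [norm_sub_rev, norm_sub_rev u v]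
      exact hy u huA
    · have huA : u ∈ A := by
        rcases hu with hu | hu
        · exact hu
        · exact absurd hu hux
      have hvA : v ∈ A := by
        rcases hv with hv | hv
        · exact hv
        · exact absurd hv hvx
      simp only [if_neg hux, if_neg hvx]
      exact hf u huA v hvA
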